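/- Let π be a permutation of the dyadic intervals such that T_π h_I = h_{π(I)} defines a bounded operator on dyadic BMO with bounded inverse T_{π⁻¹}. Then there exists M > 0 such that for every collection B of dyadic intervals, (1/M)[[B]] ≤ [[π(B)]] ≤ M[[B]]. -/
import Mathlib


open MeasureTheory ENNReal

/-- A dyadic subinterval of `[0,1]`: `[k/2^n, (k+1)/2^n)`. -/
structure DyadicI where
  n : ℕ
  k : ℕ
  hk : k < 2 ^ n

namespace DyadicI

/-- The underlying set of a dyadic interval. -/
noncomputable def toSet (I : DyadicI) : Set ℝ :=
  Set.Ico ((I.k : ℝ) / 2 ^ I.n) ((I.k + 1 : ℝ) / 2 ^ I.n)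

/-- The length `|I| = 2^{-n}`. -/
noncomputable def len (I : DyadicI) : ℝ≥0∞ := (2 ^ I.n : ℝ≥0∞)⁻¹

/-- Containment of dyadic intervals. -/
def le (J I : DyadicI) : Prop := J.toSet ⊆ I.toSet

/-- The measure of the pointset covered by a collection of dyadic intervals. -/
noncomputable def star (B : Set DyadicI) : ℝ≥0∞ :=
  volume (⋃ I ∈ B, I.toSet)

/-- The Carleson constant of a collection of dyadic intervals. -/
noncomputable def carleson (B : Set DyadicI) : ℝ≥0∞ :=
  ⨆ I : DyadicI, (len I)⁻¹ * ∑' J : {J : DyadicI // J ∈ B ∧ le J I}, len (J : DyadicI)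

/-- Maximal intervals of a collection. -/
def maxB (B : Set DyadicI) : Set DyadicI :=
  {I | I ∈ B ∧ ∀ J ∈ B, le I J → J = I}

/-- Squared dyadic BMO norm of a coefficient family, sup over collections. -/
noncomputable def bmoSq (x : DyadicI → ℝ) : ℝ≥0∞ :=
  ⨆ B : Set DyadicI,
    (star B)⁻¹ * ∑' I : B, ENNReal.ofReal (x I ^ 2) * len (I : DyadicI)

/-- Squared dyadic BMO norm of a coefficient family, sup over dyadic intervals. -/
noncomputable def bmoSq' (x : DyadicI → ℝ) : ℝ≥0∞ :=
  ⨆ I : DyadicI,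
    (len I)⁻¹ * ∑' J : {J : DyadicI // le J I}, ENNReal.ofReal (x J ^ 2) * len (J : DyadicI)

end DyadicI

open DyadicI

open Classical in
lemma carleson_eq_bmoSq' (B : Set DyadicI) :
    carleson B = bmoSq' (fun I => if I ∈ B then 1 else 0) := by
  unfold carleson bmoSq'
  refine iSup_congr fun I => ?_
  congr 1
  refine (tsum_subtype {J : DyadicI | J ∈ B ∧ le J I} (fun J => len J)).trans
    (Eq.trans ?_ (tsum_subtype {J : DyadicI | le J I}
      (fun J => ENNReal.ofReal ((if J ∈ B then (1:ℝ) else 0) ^ 2) * len J)).symm)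
  refine tsum_congr fun J => ?_
  by_cases hB : J ∈ B <;> by_cases hI : le J I <;>
    simp [Set.indicator, hB, hI]

/-- if the permutation operator `T_π` is bounded on dyadic BMO together
with its inverse `T_{π⁻¹}`, then `π` distorts Carleson constants by at most a
multiplicative constant. -/
theorem carleson_bound_of_bmo_isomorphism (π : Equiv.Perm DyadicI)
    (C : ℝ≥0∞) (hC : C ≠ ∞)
    (hbdd : ∀ x : DyadicI → ℝ, bmoSq' (fun I => x (π.symm I)) ≤ C * bmoSq' x)
    (hbdd' : ∀ x : DyadicI → ℝ, bmoSq' (fun I => x (π I)) ≤ C * bmoSq' x) :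
    ∃ M : ℝ≥0∞, 0 < M ∧ M ≠ ∞ ∧ ∀ B : Set DyadicI,
      M⁻¹ * carleson B ≤ carleson (π '' B) ∧ carleson (π '' B) ≤ M * carleson B := by
  classical
  refine ⟨C + 1, lt_of_lt_of_le zero_lt_one le_add_self,
    ENNReal.add_ne_top.mpr ⟨hC, ENNReal.one_ne_top⟩, fun B => ?_⟩
  have h1 : carleson (π '' B) ≤ C * carleson B := by
    have := hbdd (fun I => if I ∈ B then 1 else 0)
    rw [carleson_eq_bmoSq' (π '' B), carleson_eq_bmoSq' B]
    convert this using 3 with I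
    simp [Set.mem_image_equiv]
  have h2 : carleson B ≤ C * carleson (π '' B) := by
    have := hbdd' (fun I => if I ∈ π '' B then 1 else 0)
    rw [carleson_eq_bmoSq' (π '' B), carleson_eq_bmoSq' B]
    convert this using 3 with I
    have : π I ∈ π '' B ↔ I ∈ B := by
      rw [Set.mem_image_equiv]; simp
    simp [this]
  constructor
  · have hle : carleson B ≤ (C + 1) * carleson (π '' B) :=
      h2.trans (mul_le_mul_left le_self_add _)
    calc (C + 1)⁻¹ * carleson B ≤ (C + 1)⁻¹ * ((C + 1) * carleson (π '' B)) :=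
          mul_le_mul_right hle _
      _ = carleson (π '' B) := by
          rw [← mul_assoc, ENNReal.inv_mul_cancel (by simp) (ENNReal.add_ne_top.mpr ⟨hC, ENNReal.one_ne_top⟩), one_mul]
  · exact h1.trans (mul_le_mul_left le_self_add _)
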